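/- arXiv:2204.10576 — 2 statements merged into one kernel-verified Lean document; each statement's English description precedes it below -/
import Mathlib

section
/- If the potential V is a polynomial of degree at most 2, then the Wigner pseudo-differential term reduces to the classical force term: Θ_V[f](x,k) = (1/ħ) V'(x) ∂_k f(x,k) for every Schwartz function f. -/
open MeasureTheory

/-- The pseudo-differential term Θ_V[f] in its original y-integral form. -/
noncomputable def Theta (hbar : ℝ) (V : ℝ → ℝ) (f : ℝ → ℝ → ℂ) (x k : ℝ) : ℂ :=
  (1 / (2 * Real.pi * Complex.I * hbar)) *
    ∫ y : ℝ, Complex.exp (-Complex.I * k * y) *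
      ((V (x + y / 2) - V (x - y / 2) : ℝ) : ℂ) *
      ∫ k' : ℝ, Complex.exp (Complex.I * k' * y) * f x k'

open Real FourierTransform in
lemma inner_int_eq (g : SchwartzMap ℝ ℂ) (y : ℝ) :
    (∫ k' : ℝ, Complex.exp (Complex.I * k' * y) * g k') = 𝓕 (⇑g) (-(y/(2*π))) := by
  rw [Real.fourier_eq']
  congr 1
  funext v
  rw [smul_eq_mul]
  congr 1
  simp only [RCLike.inner_apply, conj_trivial]
  have h : -2*π*(-(y/(2*π)) * v) = v*y := by field_simp
  rw [show (-2*π*(-(y/(2*π)) * v) : ℝ) = v*y from h]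
  push_cast
  ring

lemma poly_diff (V : Polynomial ℝ) (hV : V.natDegree ≤ 2) (x y : ℝ) :
    V.eval (x + y/2) - V.eval (x - y/2) = V.derivative.eval x * y := by
  have h3 : V.natDegree < 3 := lt_of_le_of_lt hV (by norm_num)
  have hd : V.derivative.natDegree < 2 :=
    lt_of_le_of_lt (Polynomial.natDegree_derivative_le V) (by omega)
  rw [Polynomial.eval_eq_sum_range' h3, Polynomial.eval_eq_sum_range' h3,
    Polynomial.eval_eq_sum_range' hd]
  simp [Finset.sum_range_succ, Polynomial.coeff_derivative]
  ring

open Real FourierTransform in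
lemma key_int (g : SchwartzMap ℝ ℂ) (k : ℝ) :
    (2*π*Complex.I) * (∫ u : ℝ, Complex.exp ((2*π*(u*k) : ℝ) * Complex.I) * (↑u * 𝓕 (⇑g) u))
      = deriv (⇑g) k := by
  have hderiv_eq : deriv (⇑g) = ⇑(SchwartzMap.derivCLM ℝ ℂ g) := by
    funext t; simp [SchwartzMap.derivCLM_apply]
  have hd_int : Integrable (deriv ⇑g) := hderiv_eq ▸ (SchwartzMap.derivCLM ℝ ℂ g).integrable
  have hF : 𝓕 (deriv ⇑g) = fun u : ℝ => (2*π*Complex.I*u) • 𝓕 (⇑g) u :=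
    Real.fourier_deriv g.integrable g.differentiable hd_int
  have hFd_int : Integrable (𝓕 (deriv ⇑g)) := by
    rw [hderiv_eq]
    exact ((SchwartzMap.fourierTransformCLM ℝ (SchwartzMap.derivCLM ℝ ℂ g)).integrable).congr
      (Filter.EventuallyEq.of_eq rfl)
  have hcont : ContinuousAt (deriv ⇑g) k := by
    rw [hderiv_eq]; exact (SchwartzMap.derivCLM ℝ ℂ g).continuous.continuousAt
  have hinv : 𝓕⁻ (𝓕 (deriv ⇑g)) k = deriv ⇑g k := hd_int.fourierInv_fourier_eq hFd_int hcont
  rw [hF, Real.fourierInv_eq'] at hinv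
  simp only [RCLike.inner_apply, conj_trivial, smul_eq_mul] at hinv
  rw [show (fun v : ℝ => Complex.exp ((2*π*(k*v) : ℝ) * Complex.I) * (2*π*Complex.I*v * 𝓕 (⇑g) v))
      = fun v : ℝ => (2*π*Complex.I) * (Complex.exp ((2*π*(v*k) : ℝ) * Complex.I) * (↑v * 𝓕 (⇑g) v))
    from by funext v; push_cast; ring, MeasureTheory.integral_const_mul] at hinv
  exact hinv

open Real FourierTransform in
/-- If `V` is a polynomial of degree at most 2, the pseudo-differential term reduces to the
classical force term `(1/ħ) V'(x) ∂_k f(x,k)` for every Schwartz function `f` in `k`. -/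
theorem stmt0 (hbar : ℝ) (hhbar : 0 < hbar) (V : Polynomial ℝ) (hV : V.natDegree ≤ 2)
    (f : ℝ → SchwartzMap ℝ ℂ) (x k : ℝ) :
    Theta hbar (fun t => V.eval t) (fun x k => f x k) x k =
      (1 / hbar : ℂ) * ((V.derivative.eval x : ℝ) : ℂ) * deriv (fun k' => f x k') k := by
  set g : SchwartzMap ℝ ℂ := f x with hg
  set c : ℝ := V.derivative.eval x with hc
  have hπ : (π : ℝ) ≠ 0 := Real.pi_ne_zero
  have hπc : (π : ℂ) ≠ 0 := Complex.ofReal_ne_zero.mpr hπ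
  set G : ℝ → ℂ := fun u => Complex.exp ((2*π*(u*k) : ℝ) * Complex.I) * ((c : ℂ) * (-(2*π)*u)) * 𝓕 (⇑g) u with hG
  have houter : (fun y : ℝ => Complex.exp (-Complex.I * k * y) *
      ((V.eval (x + y / 2) - V.eval (x - y / 2) : ℝ) : ℂ) *
      ∫ k' : ℝ, Complex.exp (Complex.I * k' * y) * f x k')
      = fun y : ℝ => G ((-(2*π))⁻¹ * y) := by
    funext y
    rw [inner_int_eq g y, poly_diff V hV x y, hG]
    simp only
    rw [show ((-(2*π))⁻¹ * y : ℝ) = -(y/(2*π)) from by field_simp]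
    congr 1
    · congr 1
      · congr 1
        rw [show (2*π*(-(y/(2*π))*k) : ℝ) = -(y*k) from by field_simp]
        push_cast
        ring
      · push_cast
        field_simp
        exact mul_comm _ _
  unfold Theta
  rw [houter, MeasureTheory.Measure.integral_comp_mul_left G ((-(2*π))⁻¹)]
  have habs : |((-(2*π):ℝ))⁻¹⁻¹| = 2*π := by
    rw [inv_inv, abs_neg, abs_of_pos (by positivity)]
  rw [habs]
  have hGint : (∫ u : ℝ, G u) = ((c : ℂ) * (-(2*π))) *
      ∫ u : ℝ, Complex.exp ((2*π*(u*k) : ℝ) * Complex.I) * (↑u * 𝓕 (⇑g) u) := by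
    rw [← MeasureTheory.integral_const_mul]
    congr 1
    funext u
    rw [hG]
    ring
  rw [hGint]
  have hkey := key_int g k
  have hderiv : deriv (fun k' => f x k') k = deriv (⇑g) k := rfl
  rw [hderiv]
  rw [← hkey]
  have hI : (Complex.I : ℂ) ≠ 0 := Complex.I_ne_zero
  have hhb : (hbar : ℂ) ≠ 0 := Complex.ofReal_ne_zero.mpr hhbar.ne'
  set J := ∫ u : ℝ, Complex.exp ((2*π*(u*k) : ℝ) * Complex.I) * (↑u * 𝓕 (⇑g) u)
  rw [Complex.real_smul]
  push_cast
  field_simp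
  linear_combination (-(c:ℂ)*J)*Complex.I_sq
end

section
/- Moyal expansion for cubic potentials: if V(x) = ax³ + bx² + cx + d, then for any f that is three times differentiable in k, Θ_V[f](x,k) = (1/ħ) V'(x) ∂_k f(x,k) − (1/(4ħ·3!)) V'''(x) ∂_k³ f(x,k) (with V''' = 6a), where Θ_V[f] is the y-integral form of the pseudo-differential term and f(x,·) is a Schwartz function. -/
open MeasureTheory

open FourierTransform Real Complex

noncomputable def iterS (n : ℕ) (g : SchwartzMap ℝ ℂ) : SchwartzMap ℝ ℂ :=
  (SchwartzMap.derivCLM ℝ ℂ)^[n] g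

lemma iterS_coe (n : ℕ) (g : SchwartzMap ℝ ℂ) : ⇑(iterS n g) = iteratedDeriv n ⇑g := by
  induction n with
  | zero => simp [iterS, iteratedDeriv_zero]
  | succ n ih =>
    rw [iteratedDeriv_succ, ← ih, iterS, Function.iterate_succ_apply']
    rfl

lemma key (g : SchwartzMap ℝ ℂ) (n : ℕ) (k : ℝ) :
    ∫ ξ : ℝ, Complex.exp (↑(2 * Real.pi * (ξ * k)) * Complex.I) *
      ((2 * Real.pi * Complex.I * ξ) ^ n * 𝓕 (⇑g) ξ) = iteratedDeriv n (⇑g) k := by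
  have hFT : 𝓕 (iteratedDeriv n ⇑g) =
      fun ξ : ℝ => (2 * Real.pi * Complex.I * ξ) ^ n • 𝓕 (⇑g) ξ := by
    apply Real.fourier_iteratedDeriv (N := ⊤) (g.smooth ⊤)
    · intro m _
      rw [← iterS_coe]
      exact (iterS m g).integrable
    · exact le_top
  have hinv : 𝓕⁻ (𝓕 (iteratedDeriv n ⇑g)) k = iteratedDeriv n ⇑g k := by
    rw [← iterS_coe]
    apply MeasureTheory.Integrable.fourierInv_fourier_eq (iterS n g).integrable
    · rw [← SchwartzMap.fourier_coe, ← SchwartzMap.fourierTransformCLM_apply ℝ]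
      exact (SchwartzMap.fourierTransformCLM ℝ (iterS n g)).integrable
    · exact (iterS n g).continuous.continuousAt
  rw [← hinv, Real.fourierInv_eq', hFT]
  congr 1
  ext ξ
  simp only [RCLike.inner_apply, conj_trivial, smul_eq_mul]
  rw [mul_comm k ξ]

lemma int_aux (g : SchwartzMap ℝ ℂ) (n : ℕ) (k : ℝ) :
    Integrable (fun ξ : ℝ => Complex.exp (↑(2 * Real.pi * (ξ * k)) * Complex.I) *
      ((2 * Real.pi * Complex.I * ξ) ^ n * 𝓕 (⇑g) ξ)) := by
  rw [← SchwartzMap.fourier_coe, ← SchwartzMap.fourierTransformCLM_apply ℝ]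
  set G := SchwartzMap.fourierTransformCLM ℝ g
  apply Integrable.mono' (((G.integrable_pow_mul volume n).const_mul ((2 * Real.pi) ^ n)))
  · apply Continuous.aestronglyMeasurable
    fun_prop
  · filter_upwards with ξ
    rw [norm_mul, norm_mul, Complex.norm_exp_ofReal_mul_I, one_mul, norm_pow]
    have : ‖(2 * Real.pi * Complex.I * ξ : ℂ)‖ = 2 * Real.pi * ‖ξ‖ := by
      simp only [norm_mul, Complex.norm_ofNat, Complex.norm_real, Complex.norm_I,
        Real.norm_eq_abs, _root_.abs_of_nonneg Real.pi_nonneg, mul_one]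
    rw [this]
    rw [mul_pow]
    ring_nf
    exact le_refl _

lemma alg (c1 a u : ℝ) (e G : ℂ) :
    e * ((c1 * (-(2 * Real.pi) * u) + a * (-(2 * Real.pi) * u) ^ 3 / 4 : ℝ) : ℂ) * G
    = (c1 : ℂ) * Complex.I * (e * ((2 * Real.pi * Complex.I * u) ^ 1 * G)) +
      (-((a : ℂ) / 4) * Complex.I) * (e * ((2 * Real.pi * Complex.I * u) ^ 3 * G)) := by
  push_cast
  linear_combination (e * G * (-(2*(Real.pi:ℂ)*c1*u) +
    2*(a:ℂ)*(Real.pi:ℂ)^3*u^3*(Complex.I^2 - 1))) * Complex.I_sq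


/-- Moyal expansion for cubic potentials `V(x) = ax³ + bx² + cx + d`:
`Θ_V[f] = (1/ħ) V'(x) ∂_k f − (1/(4ħ·3!)) V'''(x) ∂_k³ f`. -/
theorem stmt6 (hbar : ℝ) (hhbar : 0 < hbar) (a b c d : ℝ)
    (f : ℝ → SchwartzMap ℝ ℂ) (x k : ℝ) :
    Theta hbar (fun t => a * t ^ 3 + b * t ^ 2 + c * t + d) (fun x k => f x k) x k =
      (1 / hbar : ℂ) * ((3 * a * x ^ 2 + 2 * b * x + c : ℝ) : ℂ) *
          deriv (fun k' => f x k') k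
      - (1 / (4 * hbar * 6) : ℂ) * ((6 * a : ℝ) : ℂ) *
          iteratedDeriv 3 (fun k' => f x k') k := by
  have hπ : (Real.pi : ℝ) ≠ 0 := Real.pi_ne_zero
  have hhb : (hbar : ℝ) ≠ 0 := hhbar.ne'
  set g : SchwartzMap ℝ ℂ := f x with hg
  set c1 : ℝ := 3 * a * x ^ 2 + 2 * b * x + c with hc1
  set E : ℝ → ℂ := fun y => Complex.exp (-Complex.I * k * y) *
      ((c1 * y + a * y ^ 3 / 4 : ℝ) : ℂ) * 𝓕 (⇑g) (-(y / (2 * Real.pi))) with hE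
  have hV : ∀ y : ℝ, (a * (x + y/2) ^ 3 + b * (x + y/2) ^ 2 + c * (x + y/2) + d)
      - (a * (x - y/2) ^ 3 + b * (x - y/2) ^ 2 + c * (x - y/2) + d)
      = c1 * y + a * y ^ 3 / 4 := by intro y; rw [hc1]; ring
  have hInner : ∀ y : ℝ, (∫ k' : ℝ, Complex.exp (Complex.I * k' * y) * g k')
      = 𝓕 (⇑g) (-(y / (2 * Real.pi))) := by
    intro y
    rw [Real.fourier_eq']
    congr 1
    ext v
    rw [smul_eq_mul]
    congr 1
    have hπC : (Real.pi : ℂ) ≠ 0 := Complex.ofReal_ne_zero.mpr hπ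
    simp only [RCLike.inner_apply, conj_trivial]
    push_cast
    field_simp
  have hTheta : Theta hbar (fun t => a * t ^ 3 + b * t ^ 2 + c * t + d)
      (fun x k => f x k) x k = (1 / (2 * Real.pi * Complex.I * hbar)) * ∫ y : ℝ, E y := by
    unfold Theta
    congr 1
    apply integral_congr_ae
    filter_upwards with y
    rw [hE]
    simp only
    rw [← hInner y]
    congr 2
    exact_mod_cast congrArg (fun t : ℝ => (t : ℂ)) (hV y)
  rw [hTheta]
  have hCoV : (∫ y : ℝ, E y) = (2 * Real.pi : ℝ) • ∫ ξ : ℝ, E (-(2 * Real.pi) * ξ) := by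
    rw [MeasureTheory.Measure.integral_comp_mul_left E (-(2 * Real.pi))]
    rw [smul_smul]
    rw [abs_inv, abs_neg, abs_of_pos (by positivity : (0:ℝ) < 2 * Real.pi)]
    rw [mul_inv_cancel₀ (by positivity), one_smul]
  rw [hCoV]
  have hpt : ∀ ξ : ℝ, E (-(2 * Real.pi) * ξ)
      = (c1 : ℂ) * Complex.I * (Complex.exp (↑(2 * Real.pi * (ξ * k)) * Complex.I) *
          ((2 * Real.pi * Complex.I * ξ) ^ 1 * 𝓕 (⇑g) ξ)) +
        (-((a : ℂ) / 4) * Complex.I) * (Complex.exp (↑(2 * Real.pi * (ξ * k)) * Complex.I) *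
          ((2 * Real.pi * Complex.I * ξ) ^ 3 * 𝓕 (⇑g) ξ)) := by
    intro ξ
    rw [hE]
    simp only
    rw [show -(-(2 * Real.pi) * ξ / (2 * Real.pi)) = ξ by field_simp]
    rw [show -Complex.I * k * (-(2 * Real.pi) * ξ : ℝ) = ↑(2 * Real.pi * (ξ * k)) * Complex.I by
      push_cast; ring]
    exact alg c1 a ξ _ _
  rw [integral_congr_ae (Filter.Eventually.of_forall hpt)]
  rw [integral_add ((int_aux g 1 k).const_mul _) ((int_aux g 3 k).const_mul _),
    integral_const_mul, integral_const_mul, key, key, iteratedDeriv_one]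
  have hD1 : deriv (fun k' => f x k') k = deriv (⇑g) k := rfl
  have hD3 : iteratedDeriv 3 (fun k' => f x k') k = iteratedDeriv 3 (⇑g) k := rfl
  rw [hD1, hD3]
  set D1 := deriv (⇑g) k
  set D3 := iteratedDeriv 3 (⇑g) k
  have hπC : (Real.pi : ℂ) ≠ 0 := Complex.ofReal_ne_zero.mpr hπ
  have hhbC : (hbar : ℂ) ≠ 0 := Complex.ofReal_ne_zero.mpr hhb
  have h2πI : (2 * (Real.pi:ℂ) * Complex.I * (hbar:ℂ)) ≠ 0 := by
    simp [Complex.I_ne_zero, hhbC, hπC]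
  have h2π : (2 * (Real.pi:ℂ) * (hbar:ℂ)) ≠ 0 := by simp [hhbC, hπC]
  have hIdiv : (1:ℂ) / (2 * ↑Real.pi * Complex.I * ↑hbar) = -Complex.I / (2 * ↑Real.pi * ↑hbar) := by
    rw [div_eq_div_iff h2πI h2π]
    linear_combination (2*(Real.pi:ℂ)*(hbar:ℂ)) * Complex.I_sq
  rw [hIdiv]
  simp only [Complex.real_smul]
  push_cast
  field_simp
  linear_combination (-(4:ℂ)*(c1:ℂ)*D1 + (a:ℂ)*D3) * Complex.I_sq
end
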